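/- Let τ = (1+√5)/2 and σ = (1−√5)/2, and define the quaternions f = i, g = (−1+i+j+k)/2, and h = (i − σj − τk)/2. Then f² = h² = (gh)² = −1 and g³ = (fg)³ = (fh)³ = 1. -/

import Mathlib

set_option maxHeartbeats 1000000


open Quaternion

/-- The standard quaternion unit `i`. -/
noncomputable def quatI : ℍ[ℝ] := ⟨0, 1, 0, 0⟩

/-- The standard quaternion unit `j`. -/
noncomputable def quatJ : ℍ[ℝ] := ⟨0, 0, 1, 0⟩

/-- The standard quaternion unit `k`. -/
noncomputable def quatK : ℍ[ℝ] := ⟨0, 0, 0, 1⟩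

private lemma quatI_re : quatI.re = 0 := rfl
private lemma quatI_imI : quatI.imI = 1 := rfl
private lemma quatI_imJ : quatI.imJ = 0 := rfl
private lemma quatI_imK : quatI.imK = 0 := rfl
private lemma quatJ_re : quatJ.re = 0 := rfl
private lemma quatJ_imI : quatJ.imI = 0 := rfl
private lemma quatJ_imJ : quatJ.imJ = 1 := rfl
private lemma quatJ_imK : quatJ.imK = 0 := rfl
private lemma quatK_re : quatK.re = 0 := rfl
private lemma quatK_imI : quatK.imI = 0 := rfl
private lemma quatK_imJ : quatK.imJ = 0 := rfl
private lemma quatK_imK : quatK.imK = 1 := rfl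

private lemma half_eq_smul (a : ℍ[ℝ]) : a / 2 = (2⁻¹ : ℝ) • a := by
  rw [div_eq_mul_inv, show (2 : ℍ[ℝ]) = ((2 : ℝ) : ℍ[ℝ]) by norm_cast,
    ← Quaternion.coe_inv, Quaternion.mul_coe_eq_smul]

/-- With `τ = (1+√5)/2`, `σ = (1−√5)/2`, the quaternions `f = i`, `g = (−1+i+j+k)/2` and
`h = (i − σj − τk)/2` satisfy `f² = h² = (gh)² = −1` and `g³ = (fg)³ = (fh)³ = 1`. -/
theorem binary_icosahedral_generator_relations (τ σ : ℝ)
    (hτ : τ = (1 + Real.sqrt 5) / 2) (hσ : σ = (1 - Real.sqrt 5) / 2)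
    (f g h : ℍ[ℝ])
    (hf : f = quatI)
    (hg : g = (-1 + quatI + quatJ + quatK) / 2)
    (hh : h = (quatI - σ • quatJ - τ • quatK) / 2) :
    f ^ 2 = -1 ∧ h ^ 2 = -1 ∧ (g * h) ^ 2 = -1 ∧
    g ^ 3 = 1 ∧ (f * g) ^ 3 = 1 ∧ (f * h) ^ 3 = 1 := by
  have h5 : Real.sqrt 5 * Real.sqrt 5 = 5 := Real.mul_self_sqrt (by norm_num)
  have h52 : Real.sqrt 5 ^ 2 = 5 := by rw [sq]; exact h5
  have h53 : Real.sqrt 5 ^ 3 = 5 * Real.sqrt 5 := by rw [pow_succ, h52]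
  subst hτ hσ hf hg hh
  refine ⟨?_, ?_, ?_, ?_, ?_, ?_⟩ <;>
  · ext <;>
    · simp only [quatI_re, quatI_imI, quatI_imJ, quatI_imK, quatJ_re, quatJ_imI, quatJ_imJ, quatJ_imK, quatK_re, quatK_imI, quatK_imJ, quatK_imK, half_eq_smul, pow_succ, pow_zero, one_mul,
        Quaternion.re_mul, Quaternion.imI_mul, Quaternion.imJ_mul, Quaternion.imK_mul,
        Quaternion.re_add, Quaternion.imI_add, Quaternion.imJ_add, Quaternion.imK_add,
        Quaternion.re_sub, Quaternion.imI_sub, Quaternion.imJ_sub, Quaternion.imK_sub,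
        Quaternion.re_neg, Quaternion.imI_neg, Quaternion.imJ_neg, Quaternion.imK_neg,
        Quaternion.re_one, Quaternion.imI_one, Quaternion.imJ_one, Quaternion.imK_one,
        Quaternion.re_smul, Quaternion.imI_smul, Quaternion.imJ_smul, Quaternion.imK_smul,
        smul_eq_mul]
      ring_nf
      all_goals nlinarith [h52, h53]
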